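/- Let ζ : [0,∞) → M be right-continuous in the weak topology and such that t ↦ ∫ f dζ_t is nondecreasing for every nonnegative bounded continuous f on [0,∞). Then for every t ≥ 0, every x ≥ 0, and all sequences x_n ↓ x and y_n ↑ x in [0,∞), one has lim_{n→∞} sup_{s∈[0,t]} ζ_s((x, x_n]) = 0 and lim_{n→∞} sup_{s∈[0,t]} ζ_s((y_n, x)) = 0. -/

import Mathlib

open MeasureTheory Filter Set
open scoped NNReal ENNReal BoundedContinuousFunction Topology

noncomputable section

/-- Càdlàg on `[0,∞)`: right-continuous at every `t ≥ 0`, with left limits at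
every `t > 0` (along `[0,t)`). -/
def CadlagOn {E : Type*} [TopologicalSpace E] (f : ℝ → E) : Prop :=
  (∀ t : ℝ, 0 ≤ t → ContinuousWithinAt f (Set.Ici t) t) ∧
  (∀ t : ℝ, 0 < t → ∃ l : E, Filter.Tendsto f (nhdsWithin t (Set.Ico 0 t)) (nhds l))

/-- `D_ℝ`: real-valued càdlàg paths on `[0,∞)`. -/
def DR (f : ℝ → ℝ) : Prop := CadlagOn f

/-- `D_ℝ^↑`: nonnegative nondecreasing real-valued càdlàg paths on `[0,∞)`. -/
def DRup (f : ℝ → ℝ) : Prop :=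
  CadlagOn f ∧ (∀ t : ℝ, 0 ≤ t → 0 ≤ f t) ∧ MonotoneOn f (Set.Ici 0)

/-- `D_M`: càdlàg paths with values in the space of finite nonnegative measures
on `[0,∞)`, equipped with the topology of weak convergence. -/
def DM (ζ : ℝ → FiniteMeasure ℝ≥0) : Prop := CadlagOn ζ

/-- `D_M^↑`: paths in `D_M` such that `t ↦ ∫ f dζ_t` is nondecreasing for every
nonnegative bounded continuous `f` on `[0,∞)`. -/
def DMup (ζ : ℝ → FiniteMeasure ℝ≥0) : Prop :=
  CadlagOn ζ ∧
  ∀ f : ℝ≥0 →ᵇ ℝ≥0, MonotoneOn (fun t => (ζ t).testAgainstNN f) (Set.Ici 0)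

/-- First component of the Skorokhod map on the half-line:
`Γ₁[ψ](t) = ψ(t) − inf_{s∈[0,t]} (ψ(s) ∧ 0)`. -/
def Gamma1 (ψ : ℝ → ℝ) (t : ℝ) : ℝ :=
  ψ t - sInf ((fun s => min (ψ s) 0) '' Set.Icc 0 t)

/-- Second component of the Skorokhod map on the half-line: `Γ₂[ψ] = Γ₁[ψ] − ψ`. -/
def Gamma2 (ψ : ℝ → ℝ) (t : ℝ) : ℝ := Gamma1 ψ t - ψ t

/-- Extension of `g : [0,∞) → ℝ` by `0` on `(-∞,0)`. -/
def lsExt (g : ℝ → ℝ) : ℝ → ℝ := fun t => if t < 0 then 0 else g t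

/- The Lebesgue–Stieltjes measure `m^g(B) = g(0)δ₀(B) + ∫_{(0,∞)} 1_B dg` of a
nonnegative nondecreasing right-continuous `g` on `[0,∞)`, realized as the
Stieltjes measure of the extension of `g` by `0` on `(-∞,0)`. -/
open scoped Classical in
def lsMeasure (g : ℝ → ℝ) : Measure ℝ :=
  if h : Monotone (lsExt g) ∧ ∀ t, ContinuousWithinAt (lsExt g) (Set.Ici t) t then
    StieltjesFunction.measure ⟨lsExt g, h.1, h.2⟩
  else 0

/-- The measure-valued Skorokhod problem (MVSP): `(ξ,β,ι)` solves the MVSP for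
the data `(α,μ)`. -/
def SolvesMVSP (α : ℝ → FiniteMeasure ℝ≥0) (μ : ℝ → ℝ)
    (ξ β : ℝ → FiniteMeasure ℝ≥0) (ι : ℝ → ℝ) : Prop :=
  (∀ x : ℝ≥0, ∀ t : ℝ, 0 ≤ t →
    (ξ t (Set.Iic x) : ℝ) = (α t (Set.Iic x) : ℝ) - μ t + (β t (Set.Ioi x) : ℝ) + ι t) ∧
  (∀ x : ℝ≥0, ∀ᵐ t ∂(lsMeasure (fun s => (β s (Set.Ioi x) : ℝ))), (ξ t (Set.Iic x) : ℝ) = 0) ∧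
  (∀ x : ℝ≥0, ∀ᵐ t ∂(lsMeasure ι), (ξ t (Set.Iic x) : ℝ) = 0) ∧
  (∀ t : ℝ, 0 ≤ t → (β t Set.univ : ℝ) + ι t = μ t)

/-- System (30): `(ξ,β,ι)` solves the MVSP for `(α, μ+ρ)` and `ξ_t[0,t) = 0`
for every `t > 0`. -/
def Solves30 (α : ℝ → FiniteMeasure ℝ≥0) (μ : ℝ → ℝ)
    (ξ β : ℝ → FiniteMeasure ℝ≥0) (ι ρ : ℝ → ℝ) : Prop :=
  SolvesMVSP α (fun t => μ t + ρ t) ξ β ι ∧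
  ∀ t : ℝ, 0 < t → (ξ t (Set.Iio (Real.toNNReal t)) : ℝ) = 0

/-- A minimal solution of system (30): a solution (lying in the appropriate
path spaces) whose reneging function `ρ` is pointwise below that of any other
solution. -/
def IsMinimalSol30 (α : ℝ → FiniteMeasure ℝ≥0) (μ : ℝ → ℝ)
    (ξ β : ℝ → FiniteMeasure ℝ≥0) (ι ρ : ℝ → ℝ) : Prop :=
  (DM ξ ∧ DMup β ∧ DRup ι ∧ DRup ρ ∧ Solves30 α μ ξ β ι ρ) ∧
  ∀ (ξ' β' : ℝ → FiniteMeasure ℝ≥0) (ι' ρ' : ℝ → ℝ),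
    DM ξ' → DMup β' → DRup ι' → DRup ρ' → Solves30 α μ ξ' β' ι' ρ' →
    ∀ t : ℝ, 0 ≤ t → ρ t ≤ ρ' t

/-- The (topological) support of a finite measure on `[0,∞)`: the set of points
all of whose open neighborhoods have positive measure. -/
def measSupport (ν : FiniteMeasure ℝ≥0) : Set ℝ≥0 :=
  {x : ℝ≥0 | ∀ u : Set ℝ≥0, IsOpen u → x ∈ u → ν u ≠ 0}

/-- `σ(ν) = inf supp[ν]`, with value `∞` when `ν = 0`. -/
def sigmaOf (ν : FiniteMeasure ℝ≥0) : ℝ≥0∞ :=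
  sInf ((fun x : ℝ≥0 => (x : ℝ≥0∞)) '' measSupport ν)

/-- Assumption A on the data `(α,μ)`. -/
def AssumptionA (α : ℝ → FiniteMeasure ℝ≥0) (μ : ℝ → ℝ) : Prop :=
  (∃ (ξ0 : FiniteMeasure ℝ≥0) (a0 : ℝ → FiniteMeasure ℝ≥0)
      (lam : ℝ → ℝ) (ν : FiniteMeasure ℝ≥0),
    (∀ x : ℝ≥0, ξ0 {x} = 0) ∧
    ContinuousOn a0 (Set.Ici 0) ∧ DMup a0 ∧
    (∀ t : ℝ, 0 ≤ t → ∀ x : ℝ≥0, a0 t {x} = 0) ∧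
    Measurable lam ∧ (∀ s : ℝ, 0 ≤ s → 0 ≤ lam s) ∧
    (∀ t : ℝ, 0 ≤ t → α t = a0 t + ξ0) ∧
    (∀ t : ℝ, 0 ≤ t → ∀ x : ℝ≥0, (a0 t (Set.Iic x) : ℝ) =
      ∫ s in Set.Icc (0:ℝ) t,
        (if s ≤ (x:ℝ) then lam s * (ν (Set.Iic (Real.toNNReal ((x:ℝ) - s))) : ℝ) else 0)) ∧
    (∀ t : ℝ, 0 ≤ t →
      Filter.Tendsto (fun x : ℝ≥0 =>
          sSup ((fun s => lam s * (ν (Set.Iic x) : ℝ)) '' Set.Icc (0:ℝ) t))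
        (nhdsWithin 0 (Set.Ioi 0)) (nhds 0))) ∧
  (∃ μ0 m : ℝ → ℝ,
    ContinuousOn μ0 (Set.Ici 0) ∧ (∀ t : ℝ, 0 ≤ t → 0 ≤ μ0 t) ∧
    MonotoneOn μ0 (Set.Ici 0) ∧
    Measurable m ∧ (∀ s : ℝ, 0 ≤ s → 0 ≤ m s) ∧
    (∀ t : ℝ, 0 ≤ t → MeasureTheory.IntegrableOn m (Set.Icc 0 t)) ∧
    (∀ t : ℝ, 0 ≤ t → 0 < sInf (m '' Set.Icc (0:ℝ) t)) ∧
    (∀ t : ℝ, 0 ≤ t → μ t = μ0 t + ∫ s in Set.Icc (0:ℝ) t, m s))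


/-- Domination of measures from monotone test integrals: if `t ↦ ∫ f dζ_t` is
nondecreasing on `[0,∞)` for every bounded continuous `f : ℝ≥0 →ᵇ ℝ≥0`, then
`ζ_s ≤ ζ_t` setwise for `0 ≤ s ≤ t`. -/
lemma aux_meas_le (ζ : ℝ → FiniteMeasure ℝ≥0)
    (hmono : ∀ f : ℝ≥0 →ᵇ ℝ≥0, MonotoneOn (fun t => (ζ t).testAgainstNN f) (Set.Ici 0))
    {s t : ℝ} (hs : 0 ≤ s) (hst : s ≤ t) (A : Set ℝ≥0) :
    (ζ s : Measure ℝ≥0) A ≤ (ζ t : Measure ℝ≥0) A := by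
  have ht : (0:ℝ) ≤ t := hs.trans hst
  have hlin : ∀ f : ℝ≥0 →ᵇ ℝ≥0,
      (∫⁻ x, f x ∂(ζ s : Measure ℝ≥0)) ≤ ∫⁻ x, f x ∂(ζ t : Measure ℝ≥0) := by
    intro f
    have h := hmono f hs ht hst
    rw [← FiniteMeasure.testAgainstNN_coe_eq, ← FiniteMeasure.testAgainstNN_coe_eq]
    exact_mod_cast h
  have hopen : ∀ U : Set ℝ≥0, IsOpen U →
      (ζ s : Measure ℝ≥0) U ≤ (ζ t : Measure ℝ≥0) U := by
    intro U hU
    rw [hU.measure_eq_iSup_isCompact]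
    refine iSup₂_le fun K hKU => iSup_le fun hK => ?_
    obtain ⟨δ, δpos, hδ⟩ := hK.exists_thickening_subset_open hU hKU
    have hpos : 0 < δ / 2 := half_pos δpos
    calc (ζ s : Measure ℝ≥0) K
        ≤ ∫⁻ x, (thickenedIndicator hpos K x : ℝ≥0∞) ∂(ζ s : Measure ℝ≥0) :=
          measure_le_lintegral_thickenedIndicator _ hK.measurableSet hpos
      _ ≤ ∫⁻ x, (thickenedIndicator hpos K x : ℝ≥0∞) ∂(ζ t : Measure ℝ≥0) := hlin _
      _ ≤ ∫⁻ x, U.indicator (fun _ => (1:ℝ≥0∞)) x ∂(ζ t : Measure ℝ≥0) := by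
          refine lintegral_mono fun x => ?_
          by_cases hx : x ∈ Metric.thickening (δ/2) K
          · have hxU : x ∈ U := hδ (Metric.thickening_mono (by linarith) K hx)
            simp only [hxU, indicator_of_mem]
            exact_mod_cast thickenedIndicator_le_one hpos K x
          · simp [thickenedIndicator_zero hpos K hx]
      _ = (ζ t : Measure ℝ≥0) U := by
          rw [lintegral_indicator hU.measurableSet]
          simp
  rw [A.measure_eq_iInf_isOpen, A.measure_eq_iInf_isOpen]
  exact iInf_mono fun U => iInf_mono fun hAU => iInf_mono fun hUo => hopen U hUo

/-- If `S n` is an antitone sequence of measurable sets with empty intersection,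
then `sup_{s ∈ [0,t]} ζ_s (S n) → 0`. -/
lemma aux_sup_tendsto (ζ : ℝ → FiniteMeasure ℝ≥0)
    (hmono : ∀ f : ℝ≥0 →ᵇ ℝ≥0, MonotoneOn (fun t => (ζ t).testAgainstNN f) (Set.Ici 0))
    {t : ℝ} (ht : 0 ≤ t) (S : ℕ → Set ℝ≥0) (hSm : ∀ n, MeasurableSet (S n))
    (hanti : Antitone S) (hempty : ⋂ n, S n = ∅) :
    Filter.Tendsto (fun n => sSup ((fun s => (ζ s (S n) : ℝ)) '' Set.Icc 0 t))
      Filter.atTop (nhds 0) := by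
  set a : ℕ → ℝ := fun n => ((ζ t : Measure ℝ≥0) (S n)).toReal with ha
  have hcoe : ∀ (s : ℝ) (n : ℕ),
      ((ζ s (S n) : ℝ≥0) : ℝ) = ((ζ s : Measure ℝ≥0) (S n)).toReal := by
    intro s n
    rw [← FiniteMeasure.ennreal_coeFn_eq_coeFn_toMeasure, ENNReal.coe_toReal]
  have hub : ∀ n, ∀ v ∈ (fun s => (ζ s (S n) : ℝ)) '' Set.Icc 0 t, v ≤ a n := by
    rintro n v ⟨s, hs, rfl⟩
    show ((ζ s (S n) : ℝ≥0) : ℝ) ≤ a n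
    rw [hcoe s n]
    exact ENNReal.toReal_mono (measure_ne_top _ _) (aux_meas_le ζ hmono hs.1 hs.2 (S n))
  have hne : ∀ n, ((fun s => (ζ s (S n) : ℝ)) '' Set.Icc 0 t).Nonempty :=
    fun n => (Set.nonempty_Icc.mpr ht).image _
  have hbdd : ∀ n, BddAbove ((fun s => (ζ s (S n) : ℝ)) '' Set.Icc 0 t) :=
    fun n => ⟨a n, hub n⟩
  have hlow : ∀ n, (0:ℝ) ≤ sSup ((fun s => (ζ s (S n) : ℝ)) '' Set.Icc 0 t) := by
    intro n
    refine le_csSup_of_le (hbdd n) ⟨0, Set.left_mem_Icc.mpr ht, rfl⟩ ?_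
    exact (ζ (0:ℝ) (S n)).coe_nonneg
  have hupp : ∀ n, sSup ((fun s => (ζ s (S n) : ℝ)) '' Set.Icc 0 t) ≤ a n :=
    fun n => csSup_le (hne n) (hub n)
  have htend : Filter.Tendsto a Filter.atTop (nhds 0) := by
    have h1 : Filter.Tendsto (fun n => (ζ t : Measure ℝ≥0) (S n)) Filter.atTop (nhds 0) := by
      have := tendsto_measure_iInter_atTop (μ := (ζ t : Measure ℝ≥0))
        (fun n => (hSm n).nullMeasurableSet) hanti ⟨0, measure_ne_top _ _⟩
      rwa [hempty, measure_empty] at this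
    have := (ENNReal.tendsto_toReal (by simp : (0:ℝ≥0∞) ≠ ⊤)).comp h1
    rw [ENNReal.toReal_zero] at this
    exact this
  exact tendsto_of_tendsto_of_tendsto_of_le_of_le tendsto_const_nhds htend hlow hupp

/-- For a right-continuous nondecreasing measure-valued path `ζ`, the masses of
the thin intervals `(x, x_n]` and `(y_n, x)` vanish uniformly on `[0,t]` as
`x_n ↓ x` and `y_n ↑ x`. -/
theorem thin_interval_mass_vanishes
    (ζ : ℝ → FiniteMeasure ℝ≥0)
    (hrc : ∀ t : ℝ, 0 ≤ t → ContinuousWithinAt ζ (Set.Ici t) t)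
    (hmono : ∀ f : ℝ≥0 →ᵇ ℝ≥0, MonotoneOn (fun t => (ζ t).testAgainstNN f) (Set.Ici 0))
    (t : ℝ) (ht : 0 ≤ t) (x : ℝ≥0) :
    (∀ xn : ℕ → ℝ≥0, Antitone xn → Filter.Tendsto xn Filter.atTop (nhds x) →
      Filter.Tendsto
        (fun n => sSup ((fun s => (ζ s (Set.Ioc x (xn n)) : ℝ)) '' Set.Icc 0 t))
        Filter.atTop (nhds 0)) ∧
    (∀ yn : ℕ → ℝ≥0, Monotone yn → Filter.Tendsto yn Filter.atTop (nhds x) →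
      Filter.Tendsto
        (fun n => sSup ((fun s => (ζ s (Set.Ioo (yn n) x) : ℝ)) '' Set.Icc 0 t))
        Filter.atTop (nhds 0)) := by
  constructor
  · intro xn hxn hlim
    refine aux_sup_tendsto ζ hmono ht (fun n => Set.Ioc x (xn n))
      (fun n => measurableSet_Ioc) (fun m n hmn => Set.Ioc_subset_Ioc_right (hxn hmn)) ?_
    ext y
    simp only [Set.mem_iInter, Set.mem_Ioc, Set.mem_empty_iff_false, iff_false, not_forall]
    by_contra h
    push_neg at h
    have h1 : x < y := (h 0).1
    have h2 : y ≤ x := ge_of_tendsto hlim (Filter.Eventually.of_forall fun n => (h n).2)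
    exact absurd h1 (not_lt.mpr h2)
  · intro yn hyn hlim
    refine aux_sup_tendsto ζ hmono ht (fun n => Set.Ioo (yn n) x)
      (fun n => measurableSet_Ioo) (fun m n hmn => Set.Ioo_subset_Ioo_left (hyn hmn)) ?_
    ext y
    simp only [Set.mem_iInter, Set.mem_Ioo, Set.mem_empty_iff_false, iff_false, not_forall]
    by_contra h
    push_neg at h
    have h1 : y < x := (h 0).2
    have h2 : x ≤ y := le_of_tendsto hlim (Filter.Eventually.of_forall fun n => (h n).1.le)
    exact absurd h1 (not_lt.mpr h2)


end
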